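/- arXiv:1210.4964 — 4 statements merged into one kernel-verified Lean document; each statement's English description precedes it below -/
import Mathlib

section
/- Let F be a field of characteristic ≠ 2 and a, c ∈ F* with a not a square in F, and let L = F(√a) be a degree 2 extension of F containing a square root of both a and c (i.e., c is a square in L or this is the residue situation where F(√a,√c) = F(√a)). Define N : F⁴ → F by N(y₁,y₂,y₃,y₄) = (y₁² - a·y₂² + c·y₃² - a·c·y₄²)² - c·(2·y₁·y₃ - 2·a·y₂·y₄)². Then the set of nonzero values N(F⁴ \ {0}) ∩ F* equals the image of the field norm N_{L/F} : L* → F*. -/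
/-- for the degree-2 case `L = F(√a)`, the nonzero values of the quartic
form `N` are exactly the values of the field norm `N_{L/F}` on `L*`. -/
theorem stmt1 (F L : Type*) [Field F] [Field L] [Algebra F L]
    (hchar : (2 : F) ≠ 0) (a c : F) (ha : a ≠ 0) (hc : c ≠ 0)
    (hnsq : ¬ ∃ s : F, s ^ 2 = a)
    (sa : L) (hsa : sa ^ 2 = algebraMap F L a)
    (hgen : Algebra.adjoin F ({sa} : Set L) = ⊤)
    (hdeg : Module.finrank F L = 2)
    (hsc : ∃ sc : L, sc ^ 2 = algebraMap F L c) :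
    {b : F | b ≠ 0 ∧ ∃ y₁ y₂ y₃ y₄ : F, ¬ (y₁ = 0 ∧ y₂ = 0 ∧ y₃ = 0 ∧ y₄ = 0) ∧
        (y₁ ^ 2 - a * y₂ ^ 2 + c * y₃ ^ 2 - a * c * y₄ ^ 2) ^ 2
          - c * (2 * y₁ * y₃ - 2 * a * y₂ * y₄) ^ 2 = b}
      = {b : F | ∃ z : L, z ≠ 0 ∧ Algebra.norm F z = b} := by
  set f := algebraMap F L with hf
  have hinj : Function.Injective f := (algebraMap F L).injective
  have hsa_notin : ∀ s : F, f s ≠ sa := by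
    intro s h
    exact hnsq ⟨s, hinj (by rw [map_pow, h, hsa])⟩
  have hindep : ∀ x y : F, f x + f y * sa = 0 → x = 0 ∧ y = 0 := by
    intro x y h
    by_cases hy : y = 0
    · subst hy
      simp only [map_zero, zero_mul, add_zero] at h
      exact ⟨hinj (by simpa using h), rfl⟩
    · exfalso
      apply hsa_notin ((-x) / y)
      have hfy : f y ≠ 0 := fun h0 => hy (hinj (by simpa using h0))
      rw [map_div₀, map_neg]
      rw [div_eq_iff hfy]
      linear_combination -h
  -- basis
  have hli : LinearIndependent F ![(1 : L), sa] := by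
    rw [LinearIndependent.pair_iff]
    intro s t hst
    rw [Algebra.smul_def, Algebra.smul_def, mul_one] at hst
    exact hindep s t hst
  have hcard : Fintype.card (Fin 2) = Module.finrank F L := by simp [hdeg]
  set B := basisOfLinearIndependentOfCardEqFinrank hli hcard with hBdef
  have hB0 : B 0 = 1 := by rw [hBdef, coe_basisOfLinearIndependentOfCardEqFinrank]; rfl
  have hB1 : B 1 = sa := by rw [hBdef, coe_basisOfLinearIndependentOfCardEqFinrank]; rfl
  haveI : Module.Finite F L := Module.Finite.of_basis B
  -- representation
  have hrep : ∀ z : L, ∃ x y : F, z = f x + f y * sa := by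
    intro z
    refine ⟨B.repr z 0, B.repr z 1, ?_⟩
    have h := B.sum_repr z
    rw [Fin.sum_univ_two, hB0, hB1, Algebra.smul_def, Algebra.smul_def, mul_one] at h
    exact h.symm
  -- repr values
  have hreprval : ∀ x y : F, B.repr (f x + f y * sa) 0 = x ∧ B.repr (f x + f y * sa) 1 = y := by
    intro x y
    have h : f x + f y * sa = x • B 0 + y • B 1 := by
      rw [hB0, hB1, Algebra.smul_def, Algebra.smul_def, mul_one]
    rw [h, map_add, map_smul, map_smul, B.repr_self, B.repr_self]
    simp
  -- norm formula
  have nf : ∀ x y : F, Algebra.norm F (f x + f y * sa) = x ^ 2 - a * y ^ 2 := by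
    intro x y
    rw [Algebra.norm_eq_matrix_det B, Matrix.det_fin_two]
    rw [Algebra.leftMulMatrix_eq_repr_mul, Algebra.leftMulMatrix_eq_repr_mul,
      Algebra.leftMulMatrix_eq_repr_mul, Algebra.leftMulMatrix_eq_repr_mul, hB0, hB1]
    have e0 : (f x + f y * sa) * 1 = f x + f y * sa := mul_one _
    have e1 : (f x + f y * sa) * sa = f (a * y) + f x * sa := by
      simp only [map_mul]
      linear_combination f y * hsa
    rw [e0, e1, (hreprval x y).1, (hreprval x y).2, (hreprval (a*y) x).1,
      (hreprval (a*y) x).2]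
    ring
  -- square root of c
  obtain ⟨sc, hsc2⟩ := hsc
  obtain ⟨p, q, hpqrep⟩ := hrep sc
  have hrel : (p ^ 2 + a * q ^ 2 - c = 0) ∧ (2 * (p * q) = 0) := by
    apply hindep
    simp only [map_sub, map_add, map_mul, map_pow, map_ofNat]
    linear_combination hsc2 - f q ^ 2 * hsa - (sc + f p + f q * sa) * hpqrep
  have hpq : p = 0 ∨ q = 0 := by
    have h2 := hrel.2
    rcases mul_eq_zero.mp h2 with h | h
    · exact absurd h hchar
    · exact mul_eq_zero.mp h
  have hcrel : p ^ 2 + a * q ^ 2 = c := by linear_combination hrel.1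
  have hscne : sc ≠ 0 := by
    intro h0
    apply hc
    apply hinj
    rw [map_zero, ← hsc2, h0]
    ring
  -- key identity
  have key : ∀ y₁ y₂ y₃ y₄ : F,
      Algebra.norm F ((f y₁ + f y₂ * sa) + sc * (f y₃ + f y₄ * sa)) *
        Algebra.norm F ((f y₁ + f y₂ * sa) - sc * (f y₃ + f y₄ * sa)) =
      (y₁ ^ 2 - a * y₂ ^ 2 + c * y₃ ^ 2 - a * c * y₄ ^ 2) ^ 2
          - c * (2 * y₁ * y₃ - 2 * a * y₂ * y₄) ^ 2 := by
    intro y₁ y₂ y₃ y₄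
    have e1 : (f y₁ + f y₂ * sa) + sc * (f y₃ + f y₄ * sa)
        = f (y₁ + p * y₃ + a * q * y₄) + f (y₂ + q * y₃ + p * y₄) * sa := by
      simp only [map_add, map_mul]
      linear_combination (f y₃ + f y₄ * sa) * hpqrep + f q * f y₄ * hsa
    have e2 : (f y₁ + f y₂ * sa) - sc * (f y₃ + f y₄ * sa)
        = f (y₁ - (p * y₃ + a * q * y₄)) + f (y₂ - (q * y₃ + p * y₄)) * sa := by
      simp only [map_add, map_mul, map_sub]
      linear_combination (-(f y₃ + f y₄ * sa)) * hpqrep - f q * f y₄ * hsa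
    rw [e1, e2, nf, nf]
    rcases hpq with hp | hq
    · subst hp
      have : c = a * q ^ 2 := by linear_combination -hcrel
      subst this
      ring
    · subst hq
      have : c = p ^ 2 := by linear_combination -hcrel
      subst this
      ring
  -- main equality
  ext b
  simp only [Set.mem_setOf_eq]
  constructor
  · rintro ⟨hb, y₁, y₂, y₃, y₄, -, hN⟩
    have hnzv : Algebra.norm F (((f y₁ + f y₂ * sa) + sc * (f y₃ + f y₄ * sa)) *
        ((f y₁ + f y₂ * sa) - sc * (f y₃ + f y₄ * sa))) = b := by
      rw [map_mul, key y₁ y₂ y₃ y₄, hN]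
    exact ⟨_, Algebra.norm_ne_zero_iff.mp (by rw [hnzv]; exact hb), hnzv⟩
  · rintro ⟨z, hz, hnz⟩
    have hb : b ≠ 0 := by
      rw [← hnz]
      exact Algebra.norm_ne_zero_iff.mpr hz
    have h2L : (2 : L) ≠ 0 := by
      intro h0
      apply hchar
      apply hinj
      rw [map_ofNat, h0, map_zero]
    set u : L := (z + 1) / 2 with hu
    set v : L := (z - 1) / (2 * sc) with hv
    obtain ⟨x₁, x₂, hur⟩ := hrep u
    obtain ⟨x₃, x₄, hvr⟩ := hrep v
    have h1 : (f x₁ + f x₂ * sa) + sc * (f x₃ + f x₄ * sa) = z := by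
      rw [← hur, ← hvr, hu, hv]
      field_simp
      ring
    have h2 : (f x₁ + f x₂ * sa) - sc * (f x₃ + f x₄ * sa) = 1 := by
      rw [← hur, ← hvr, hu, hv]
      field_simp
      ring
    have hk := key x₁ x₂ x₃ x₄
    rw [h1, h2, map_one, mul_one, hnz] at hk
    refine ⟨hb, x₁, x₂, x₃, x₄, ?_, hk.symm⟩
    rintro ⟨rfl, rfl, rfl, rfl⟩
    apply hb
    rw [← hk.symm]
    ring
end

section
/- Let F be a field of characteristic ≠ 2 and a, c ∈ F* both squares in F. Define N : F⁴ → F by N(y₁,y₂,y₃,y₄) = (y₁² - a·y₂² + c·y₃² - a·c·y₄²)² - c·(2·y₁·y₃ - 2·a·y₂·y₄)². Then N restricted to F⁴ \ {0} attains every value in F*; that is, N(F⁴ \ {0}) ⊇ F*. -/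
/-- if `a` and `c` are both squares in `F`, the quartic form `N`
attains every nonzero value of `F` on `F⁴ \ {0}`. -/
theorem stmt2 (F : Type*) [Field F] (hchar : (2 : F) ≠ 0)
    (a c : F) (ha : a ≠ 0) (hc : c ≠ 0)
    (hsa : ∃ s : F, s ^ 2 = a) (hsc : ∃ t : F, t ^ 2 = c) :
    ∀ b : F, b ≠ 0 → ∃ y₁ y₂ y₃ y₄ : F, ¬ (y₁ = 0 ∧ y₂ = 0 ∧ y₃ = 0 ∧ y₄ = 0) ∧
      (y₁ ^ 2 - a * y₂ ^ 2 + c * y₃ ^ 2 - a * c * y₄ ^ 2) ^ 2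
        - c * (2 * y₁ * y₃ - 2 * a * y₂ * y₄) ^ 2 = b := by
  obtain ⟨s, hs⟩ := hsa
  obtain ⟨t, ht⟩ := hsc
  subst hs ht
  have hs0 : s ≠ 0 := by rintro rfl; simp at ha
  have ht0 : t ≠ 0 := by rintro rfl; simp at hc
  have h4 : (4 : F) ≠ 0 := by
    have : (4 : F) = 2 * 2 := by norm_num
    rw [this]; exact mul_ne_zero hchar hchar
  intro b hb
  set d : F := 4 * s * t with hd
  have hd0 : d ≠ 0 := mul_ne_zero (mul_ne_zero h4 hs0) ht0
  refine ⟨(b + 3) * s * t / d, (1 - b) * t / d, (1 - b) * s / d, (b - 1) / d, ?_, ?_⟩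
  · rintro ⟨h1, _, h3, _⟩
    rw [div_eq_zero_iff] at h1 h3
    rcases h1 with h1 | h1
    · rcases h3 with h3 | h3
      · have hb3 : b + 3 = 0 := by
          rcases mul_eq_zero.1 h1 with h | h
          · rcases mul_eq_zero.1 h with h | h
            · exact h
            · exact absurd h hs0
          · exact absurd h ht0
        have hb1 : 1 - b = 0 := by
          rcases mul_eq_zero.1 h3 with h | h
          · exact h
          · exact absurd h hs0
        have : (4 : F) = 0 := by linear_combination hb3 + hb1
        exact h4 this
      · exact hd0 h3
    · exact hd0 h1
  · have key : (((b + 3) * s * t) ^ 2 - s ^ 2 * ((1 - b) * t) ^ 2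
        + t ^ 2 * ((1 - b) * s) ^ 2 - s ^ 2 * t ^ 2 * ((b - 1)) ^ 2) ^ 2
        - t ^ 2 * (2 * ((b + 3) * s * t) * ((1 - b) * s)
            - 2 * s ^ 2 * ((1 - b) * t) * ((b - 1))) ^ 2 = b * d ^ 4 := by
      rw [hd]; ring
    have expand : ∀ Y₁ Y₂ Y₃ Y₄ : F,
        ((Y₁ / d) ^ 2 - s ^ 2 * (Y₂ / d) ^ 2 + t ^ 2 * (Y₃ / d) ^ 2
          - s ^ 2 * t ^ 2 * (Y₄ / d) ^ 2) ^ 2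
        - t ^ 2 * (2 * (Y₁ / d) * (Y₃ / d) - 2 * s ^ 2 * (Y₂ / d) * (Y₄ / d)) ^ 2
        = ((Y₁ ^ 2 - s ^ 2 * Y₂ ^ 2 + t ^ 2 * Y₃ ^ 2 - s ^ 2 * t ^ 2 * Y₄ ^ 2) ^ 2
            - t ^ 2 * (2 * Y₁ * Y₃ - 2 * s ^ 2 * Y₂ * Y₄) ^ 2) / d ^ 4 := by
      intro Y₁ Y₂ Y₃ Y₄
      field_simp
    rw [expand, key, mul_div_assoc, div_self (pow_ne_zero 4 hd0), mul_one]
end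

section
/- Conversely, let G be a group and a, b, c : G → ℤ/2 group homomorphisms. Suppose there exist functions E_{ab}, E_{bc}, F : G → ℤ/2 satisfying for all g,h: E_{ab}(gh) = E_{ab}(g) + E_{ab}(h) + a(g)·b(h), E_{bc}(gh) = E_{bc}(g) + E_{bc}(h) + b(g)·c(h), and F(gh) = F(g) + F(h) + a(g)·E_{bc}(h) + E_{ab}(g)·c(h). Then the map φ : G → U₄ defined by a₁₂∘φ = a, a₂₃∘φ = b, a₃₄∘φ = c, a₁₃∘φ = E_{ab}, a₂₄∘φ = E_{bc}, a₁₄∘φ = F is a group homomorphism. -/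
/-- homomorphisms `a, b, c : G → ℤ/2` together with cochains
`E_{ab}, E_{bc}, F` satisfying the cocycle conditions assemble into a group
homomorphism `φ : G → U₄`. -/
theorem stmt13 (G : Type*) [Group G]
    (a b c Eab Ebc Fm : G → ZMod 2)
    (ha : ∀ g h, a (g * h) = a g + a h)
    (hb : ∀ g h, b (g * h) = b g + b h)
    (hc : ∀ g h, c (g * h) = c g + c h)
    (hEab : ∀ g h, Eab (g * h) = Eab g + Eab h + a g * b h)
    (hEbc : ∀ g h, Ebc (g * h) = Ebc g + Ebc h + b g * c h)
    (hFm : ∀ g h, Fm (g * h) = Fm g + Fm h + a g * Ebc h + Eab g * c h) :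
    ∀ g h : G,
      (!![1, a (g * h), Eab (g * h), Fm (g * h);
          0, 1, b (g * h), Ebc (g * h);
          0, 0, 1, c (g * h);
          0, 0, 0, 1] : Matrix (Fin 4) (Fin 4) (ZMod 2))
        = !![1, a g, Eab g, Fm g; 0, 1, b g, Ebc g; 0, 0, 1, c g; 0, 0, 0, 1]
          * !![1, a h, Eab h, Fm h; 0, 1, b h, Ebc h; 0, 0, 1, c h; 0, 0, 0, 1] := by
  intro g h
  rw [ha, hb, hc, hEab, hEbc, hFm]
  ext i j
  fin_cases i <;> fin_cases j <;>
    simp [Matrix.mul_apply, Fin.sum_univ_succ, Matrix.vecHead, Matrix.vecTail] <;> ring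
end

section
/- Let F be a field of characteristic ≠ 2 and a, b ∈ F* with a a nonsquare, L = F(√a). If b lies in F*²·N_{L/F}(L*), then the variety X(a,b,a) given by b·x² = (y₁² − a·y₂² + a·y₃² − a²·y₄²)² − a·(2·y₁·y₃ − 2·a·y₂·y₄)² with x ≠ 0 has an F-point. (This underlies the vanishing of the symmetric triple Massey product ⟨κ(a), κ(b), κ(a)⟩.) -/
/-- for `a` a nonsquare and `L = F(√a)`, if `b ∈ F*²·N_{L/F}(L*)`
then the variety `X(a,b,a)` (the specialization `c = a`) has an `F`-point. -/
theorem stmt16 (F L : Type*) [Field F] [Field L] [Algebra F L]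
    (hchar : (2 : F) ≠ 0) (a b : F) (ha : a ≠ 0) (hb : b ≠ 0)
    (hnsq : ¬ ∃ s : F, s ^ 2 = a)
    (sa : L) (hsa : sa ^ 2 = algebraMap F L a)
    (hgen : Algebra.adjoin F ({sa} : Set L) = ⊤)
    (hdeg : Module.finrank F L = 2)
    (hbnorm : ∃ t : F, t ≠ 0 ∧ ∃ w : L, w ≠ 0 ∧ b = t ^ 2 * Algebra.norm F w) :
    ∃ x y₁ y₂ y₃ y₄ : F, x ≠ 0 ∧
      b * x ^ 2 = (y₁ ^ 2 - a * y₂ ^ 2 + a * y₃ ^ 2 - a ^ 2 * y₄ ^ 2) ^ 2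
        - a * (2 * y₁ * y₃ - 2 * a * y₂ * y₄) ^ 2 := by
  obtain ⟨t, ht, w, hw, hbw⟩ := hbnorm
  -- `sa ≠ 0`
  have hsa0 : sa ≠ 0 := by
    intro h
    apply ha
    have : algebraMap F L a = 0 := by rw [← hsa, h]; ring
    exact (map_eq_zero _).mp this
  -- linear independence of `![1, sa]`
  have hli : LinearIndependent F ![(1 : L), sa] := by
    rw [LinearIndependent.pair_iff]
    intro s u hsu
    by_contra hne
    have hu : u ≠ 0 := by
      intro h0
      subst h0
      have hs : s = 0 := by
        have : algebraMap F L s = 0 := by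
          simpa [Algebra.smul_def] using hsu
        exact (map_eq_zero _).mp this
      exact hne ⟨hs, rfl⟩
    -- then squaring shows `a` is a square
    have key : algebraMap F L u * sa = algebraMap F L (-s) := by
      have h0 : algebraMap F L s + algebraMap F L u * sa = 0 := by
        simpa [Algebra.smul_def] using hsu
      rw [map_neg]
      exact eq_neg_of_add_eq_zero_right h0
    have key2 : u ^ 2 * a = s ^ 2 := by
      apply (algebraMap F L).injective
      have := congrArg (fun z => z ^ 2) key
      simp only [mul_pow] at this
      rw [map_mul, map_pow, ← hsa, this, ← map_pow]
      congr 1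
      ring
    apply hnsq
    refine ⟨s / u, ?_⟩
    field_simp
    linear_combination -key2
  have hcard : Fintype.card (Fin 2) = Module.finrank F L := by
    simp [hdeg]
  -- the basis `{1, sa}`
  let B : Module.Basis (Fin 2) F L := basisOfLinearIndependentOfCardEqFinrank hli hcard
  have hB : ⇑B = ![(1 : L), sa] := coe_basisOfLinearIndependentOfCardEqFinrank hli hcard
  have hB0 : B 0 = 1 := by rw [hB]; rfl
  have hB1 : B 1 = sa := by rw [hB]; rfl
  set p := B.repr w 0 with hp
  set q := B.repr w 1 with hq
  have hwpq : w = algebraMap F L p + algebraMap F L q * sa := by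
    have := B.sum_repr w
    rw [Fin.sum_univ_two, hB0, hB1] at this
    rw [← this, ← hp, ← hq, Algebra.smul_def, Algebra.smul_def]
    ring
  -- compute the norm
  have hnorm : Algebra.norm F w = p ^ 2 - a * q ^ 2 := by
    rw [Algebra.norm_eq_matrix_det B w, Matrix.det_fin_two]
    have h1 : w * B 0 = p • B 0 + q • B 1 := by
      rw [hB0, hB1, hwpq, Algebra.smul_def, Algebra.smul_def]; ring
    have h2 : w * B 1 = (q * a) • B 0 + p • B 1 := by
      rw [hB0, hB1, hwpq, Algebra.smul_def, Algebra.smul_def, map_mul, ← hsa]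
      ring
    have m00 : B.repr (w * B 0) 0 = p := by
      rw [h1]; simp
    have m10 : B.repr (w * B 0) 1 = q := by
      rw [h1]; simp
    have m01 : B.repr (w * B 1) 0 = q * a := by
      rw [h2]; simp
    have m11 : B.repr (w * B 1) 1 = p := by
      rw [h2]; simp
    rw [Algebra.leftMulMatrix_eq_repr_mul, Algebra.leftMulMatrix_eq_repr_mul,
      Algebra.leftMulMatrix_eq_repr_mul, Algebra.leftMulMatrix_eq_repr_mul,
      m00, m10, m01, m11]
    ring
  refine ⟨1 / t, (p + 1) / 2, q / 2, q / 2, (p - 1) / (2 * a), by simp [ht], ?_⟩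
  rw [hbw, hnorm]
  have h4 : (4 : F) ≠ 0 := by
    have := mul_ne_zero hchar hchar
    norm_num at this ⊢
    exact this
  have h16 : (16 : F) ≠ 0 := by
    have := mul_ne_zero h4 h4
    norm_num at this ⊢
    exact this
  have h1 : ((p + 1) / 2) ^ 2 - a * (q / 2) ^ 2 + a * (q / 2) ^ 2
      - a ^ 2 * ((p - 1) / (2 * a)) ^ 2
      = ((p + 1) ^ 2 - (p - 1) ^ 2) / 4 := by
    field_simp [h4, h16]
    ring
  have h2 : 2 * ((p + 1) / 2) * (q / 2) - 2 * a * (q / 2) * ((p - 1) / (2 * a))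
      = ((p + 1) * q - (p - 1) * q) / 2 := by
    field_simp
  rw [h1, h2]
  field_simp [h4, h16]
  ring
end
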